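/- Let (Ω, F, P) be a probability space, let n ≥ n_P ≥ 1 be integers with n_o = n − n_P, and let ν > 0. Let z₁, …, z_n : Ω → ℝ be random variables such that z₁, …, z_{n_P} are independent and identically distributed; z_{n_P+1}, …, z_n are arbitrary (measurable). Set f_ν(z) = z/(1 + z²/ν), μ(ν) = E[f_ν(z₁)], σ²_ν = Var(f_ν(z₁)), and μ̂_n(ν) = (1/n)·Σ_{t=1}^n f_ν(z_t). Then for every x ≥ 0, P(|μ̂_n(ν) − μ(ν)| ≥ √ν·n_o/n + (n_P/n)·x/√n_P) ≤ 2·exp(−x²/(2σ²_ν + (2/3)·√(ν/n_P)·x)). -/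

import Mathlib

open Real MeasureTheory ProbabilityTheory

section RobustBernsteinAux


lemma fact_ge (n : ℕ) : 2 * 3 ^ n ≤ Nat.factorial (n + 2) := by
  induction n with
  | zero => simp [Nat.factorial]
  | succ k ih =>
    calc 2 * 3 ^ (k+1) = 3 * (2 * 3 ^ k) := by ring
    _ ≤ 3 * Nat.factorial (k + 2) := by omega
    _ ≤ (k + 3) * Nat.factorial (k + 2) := Nat.mul_le_mul_right _ (by omega)
    _ = Nat.factorial (k + 3) := rfl

lemma exp_quad_bound {y b t : ℝ} (hy : |y| ≤ b) (ht : 0 ≤ t) (htb : t * b < 3) :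
    Real.exp (t * y) ≤ 1 + t * y + t ^ 2 * y ^ 2 / 2 * (3 / (3 - t * b)) := by
  have hb : 0 ≤ b := le_trans (abs_nonneg y) hy
  set u := t * y with hu
  have hsum : Summable (fun n => u ^ n / (Nat.factorial n : ℝ)) :=
    Real.summable_pow_div_factorial u
  have hexp : Real.exp u = ∑' n : ℕ, u ^ n / (Nat.factorial n : ℝ) := by
    rw [Real.exp_eq_exp_ℝ, NormedSpace.exp_eq_tsum_div]
  have hsplit := Summable.sum_add_tsum_nat_add (f := fun n => u ^ n / (Nat.factorial n : ℝ)) 2 hsum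
  have hr : 0 ≤ t * b / 3 := by positivity
  have hr1 : t * b / 3 < 1 := by linarith
  have hterm : ∀ n : ℕ, u ^ (n + 2) / (Nat.factorial (n + 2) : ℝ)
      ≤ t ^ 2 * y ^ 2 / 2 * (t * b / 3) ^ n := by
    intro n
    have h1 : u ^ (n + 2) ≤ |u| ^ (n + 2) := by
      calc u ^ (n+2) ≤ |u ^ (n+2)| := le_abs_self _
      _ = |u| ^ (n+2) := by rw [abs_pow]
    have h2 : |u| ^ (n + 2) ≤ t ^ 2 * y ^ 2 * (t * b) ^ n := by
      have h : |u| = t * |y| := by rw [hu, abs_mul, abs_of_nonneg ht]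
      rw [h, show (t * |y|) ^ (n + 2) = t ^ 2 * |y| ^ 2 * (t * |y|) ^ n by ring,
        sq_abs y]
      gcongr
    have h3 : (2 * 3 ^ n : ℝ) ≤ (Nat.factorial (n + 2) : ℝ) := by
      exact_mod_cast fact_ge n
    have hfpos : (0:ℝ) < (Nat.factorial (n + 2) : ℝ) := by
      exact_mod_cast Nat.factorial_pos _
    have h23 : (0:ℝ) < 2 * 3 ^ n := by positivity
    have hnum : (0:ℝ) ≤ t ^ 2 * y ^ 2 * (t * b) ^ n := by positivity
    calc u ^ (n+2) / (Nat.factorial (n+2) : ℝ)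
        ≤ (t ^ 2 * y ^ 2 * (t * b) ^ n) / (Nat.factorial (n+2) : ℝ) := by
          gcongr
          exact h1.trans h2
      _ ≤ (t ^ 2 * y ^ 2 * (t * b) ^ n) / (2 * 3 ^ n) := by gcongr
      _ = t ^ 2 * y ^ 2 / 2 * (t * b / 3) ^ n := by
          rw [div_pow, mul_pow]; ring
  have hgsum : Summable (fun n : ℕ => t ^ 2 * y ^ 2 / 2 * (t * b / 3) ^ n) :=
    (summable_geometric_of_lt_one hr hr1).mul_left _
  have htail : ∑' n : ℕ, u ^ (n + 2) / (Nat.factorial (n + 2) : ℝ)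
      ≤ t ^ 2 * y ^ 2 / 2 * (3 / (3 - t * b)) := by
    calc ∑' n : ℕ, u ^ (n + 2) / (Nat.factorial (n + 2) : ℝ)
        ≤ ∑' n : ℕ, t ^ 2 * y ^ 2 / 2 * (t * b / 3) ^ n := by
          exact Summable.tsum_le_tsum hterm ((summable_nat_add_iff 2).2 hsum) hgsum
      _ = t ^ 2 * y ^ 2 / 2 * (1 - t * b / 3)⁻¹ := by
          rw [tsum_mul_left, tsum_geometric_of_lt_one hr hr1]
      _ = t ^ 2 * y ^ 2 / 2 * (3 / (3 - t * b)) := by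
          congr 1
          rw [inv_eq_one_div]
          rw [div_eq_div_iff (by linarith) (by linarith)]
          ring
  have hfirst : ∑ n ∈ Finset.range 2, u ^ n / (Nat.factorial n : ℝ) = 1 + u := by
    simp [Finset.sum_range_succ, Nat.factorial]
  rw [hexp, ← hsplit, hfirst]
  linarith

variable {Ω : Type*} [MeasurableSpace Ω] (P : Measure Ω) [IsProbabilityMeasure P]

lemma integrable_of_abs_le {Y : Ω → ℝ} (hY : Measurable Y) {C : ℝ}
    (h : ∀ ω, |Y ω| ≤ C) : Integrable Y P :=
  (integrable_const C).mono' hY.aestronglyMeasurable (ae_of_all _ fun ω => h ω)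

lemma mgf_quad_bound {Y : Ω → ℝ} (hY : Measurable Y) {b t : ℝ}
    (hb : ∀ ω, |Y ω| ≤ b) (hmean : ∫ ω, Y ω ∂P = 0) (ht : 0 ≤ t) (htb : t * b < 3) :
    mgf Y P t ≤ Real.exp (t ^ 2 * (∫ ω, (Y ω) ^ 2 ∂P) / 2 * (3 / (3 - t * b))) := by
  set k := t ^ 2 / 2 * (3 / (3 - t * b)) with hk
  have hYint : Integrable Y P := integrable_of_abs_le P hY hb
  have hY2int : Integrable (fun ω => (Y ω) ^ 2) P := by
    refine integrable_of_abs_le P (hY.pow_const 2) (C := b ^ 2) fun ω => ?_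
    rw [abs_pow, sq_abs, ← sq_abs (Y ω)]
    exact pow_le_pow_left₀ (abs_nonneg _) (hb ω) 2
  have hexpint : Integrable (fun ω => Real.exp (t * Y ω)) P := by
    refine integrable_of_abs_le P ((hY.const_mul t).exp) (C := Real.exp (t * b)) fun ω => ?_
    rw [abs_of_pos (Real.exp_pos _), Real.exp_le_exp]
    exact mul_le_mul_of_nonneg_left ((le_abs_self _).trans (hb ω)) ht
  have hrhsint : Integrable (fun ω => 1 + t * Y ω + k * (Y ω) ^ 2) P :=
    ((integrable_const 1).add (hYint.const_mul t)).add (hY2int.const_mul k)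
  have step1 : mgf Y P t ≤ ∫ ω, (1 + t * Y ω + k * (Y ω) ^ 2) ∂P := by
    refine integral_mono hexpint hrhsint fun ω => ?_
    have := exp_quad_bound (hb ω) ht htb
    calc Real.exp (t * Y ω) ≤ 1 + t * Y ω + t ^ 2 * (Y ω) ^ 2 / 2 * (3 / (3 - t * b)) := this
    _ = 1 + t * Y ω + k * (Y ω) ^ 2 := by rw [hk]; ring
  have step2 : ∫ ω, (1 + t * Y ω + k * (Y ω) ^ 2) ∂P
      = 1 + k * ∫ ω, (Y ω) ^ 2 ∂P := by
    have e1 : ∫ ω, (1 + t * Y ω + k * (Y ω) ^ 2) ∂P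
        = (∫ ω, (1 + t * Y ω) ∂P) + ∫ ω, k * (Y ω) ^ 2 ∂P :=
      integral_add ((integrable_const 1).add (hYint.const_mul t)) (hY2int.const_mul k)
    have e2 : ∫ ω, (1 + t * Y ω) ∂P = (∫ _ω, (1:ℝ) ∂P) + ∫ ω, t * Y ω ∂P :=
      integral_add (integrable_const 1) (hYint.const_mul t)
    rw [e1, e2, integral_const, integral_const_mul, integral_const_mul, hmean]
    simp
  have step3 : 1 + k * ∫ ω, (Y ω) ^ 2 ∂P
      ≤ Real.exp (k * ∫ ω, (Y ω) ^ 2 ∂P) := by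
    have := Real.add_one_le_exp (k * ∫ ω, (Y ω) ^ 2 ∂P)
    linarith
  have : k * ∫ ω, (Y ω) ^ 2 ∂P = t ^ 2 * (∫ ω, (Y ω) ^ 2 ∂P) / 2 * (3 / (3 - t * b)) := by
    rw [hk]; ring
  rw [← this]
  exact (step1.trans_eq step2).trans step3


set_option linter.unusedSectionVars false in
lemma bernstein_upper (m : ℕ) (Y : ℕ → Ω → ℝ) (hmeasY : ∀ i, Measurable (Y i))
    (hindep : iIndepFun (fun i : Fin m => Y i) P)
    (hident : ∀ i : Fin m, IdentDistrib (Y i) (Y 0) P P)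
    {b : ℝ} (hbpos : 0 < b) (hb : ∀ i ω, |Y i ω| ≤ b)
    (hmean : ∫ ω, Y 0 ω ∂P = 0) {ε : ℝ} (hε : 0 ≤ ε) :
    (P {ω | ε ≤ ∑ i ∈ Finset.range m, Y i ω}).toReal ≤
      Real.exp (-(ε ^ 2) / (2 * ((m : ℝ) * ∫ ω, (Y 0 ω) ^ 2 ∂P) + (2 / 3) * b * ε)) := by
  set σ2 := ∫ ω, (Y 0 ω) ^ 2 ∂P with hσ2
  have hσ2nn : 0 ≤ σ2 := integral_nonneg fun ω => sq_nonneg _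
  -- trivial case ε = 0
  rcases eq_or_lt_of_le hε with hε0 | hεpos
  · rw [← hε0]
    simp only [neg_zero, ne_eq, OfNat.ofNat_ne_zero, not_false_eq_true, zero_pow, zero_div,
      neg_zero, mul_zero, add_zero, Real.exp_zero]
    exact le_trans (ENNReal.toReal_mono ENNReal.one_ne_top prob_le_one) (by norm_num)
  have hexp_nonneg : ∀ c : ℝ, (0:ℝ) ≤ Real.exp c := fun c => (Real.exp_pos c).le
  -- degenerate case σ2 = 0 (or m = 0)
  rcases eq_or_lt_of_le (mul_nonneg (Nat.cast_nonneg m) hσ2nn : (0:ℝ) ≤ (m:ℝ) * σ2)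
    with hV0 | hVpos
  · have hsum0 : ∀ᵐ ω ∂P, ∑ i ∈ Finset.range m, Y i ω = 0 := by
      rcases Nat.eq_zero_or_pos m with hm | hm
      · subst hm; simp
      have hmR : (0:ℝ) < (m:ℝ) := by exact_mod_cast hm
      have hσ0 : σ2 = 0 := by
        rcases mul_eq_zero.1 hV0.symm with h | h
        · exact absurd h (ne_of_gt hmR)
        · exact h
      have hzero : ∀ i : Fin m, Y (i : ℕ) =ᵐ[P] 0 := by
        intro i
        have hint : Integrable (fun ω => (Y i ω) ^ 2) P := by
          refine integrable_of_abs_le P ((hmeasY i).pow_const 2) (C := b ^ 2) fun ω => ?_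
          rw [abs_pow, sq_abs, ← sq_abs (Y i ω)]
          exact pow_le_pow_left₀ (abs_nonneg _) (hb i ω) 2
        have h0 : ∫ ω, (Y i ω) ^ 2 ∂P = 0 := by
          have := ((hident i).comp (measurable_id.pow_const 2)).integral_eq
          simp only [Function.comp, id] at this
          rw [this, ← hσ2, hσ0]
        have := (integral_eq_zero_iff_of_nonneg (fun ω => sq_nonneg (Y i ω)) hint).1 h0
        filter_upwards [this] with ω hω
        simpa using pow_eq_zero_iff (n := 2) (by norm_num) |>.1 hω
      have : ∀ᵐ ω ∂P, ∀ i ∈ Finset.range m, Y i ω = 0 := by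
        rw [Filter.eventually_all_finset]
        intro i hi
        exact hzero ⟨i, Finset.mem_range.1 hi⟩
      filter_upwards [this] with ω hω
      exact Finset.sum_eq_zero hω
    have hP0 : P {ω | ε ≤ ∑ i ∈ Finset.range m, Y i ω} = 0 := by
      rw [← le_zero_iff]
      calc P {ω | ε ≤ ∑ i ∈ Finset.range m, Y i ω} ≤ P ∅ := by
            refine measure_mono_ae ?_
            filter_upwards [hsum0] with ω hω hmem
            have h' : ε ≤ ∑ i ∈ Finset.range m, Y i ω := hmem
            rw [hω] at h'
            exact absurd h' (by linarith)
        _ = 0 := measure_empty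
    rw [hP0]
    simpa using hexp_nonneg _
  -- main case
  · set V := (m : ℝ) * σ2 with hV
    have hD : 0 < V + b * ε / 3 := by positivity
    set t := ε / (V + b * ε / 3) with htdef
    have ht : 0 ≤ t := le_of_lt (div_pos hεpos hD)
    have htb : t * b < 3 := by
      rw [htdef, div_mul_eq_mul_div, div_lt_iff₀ hD]
      nlinarith
    have h3tb : 3 - t * b = 3 * V / (V + b * ε / 3) := by
      rw [htdef]
      field_simp
      ring
    -- Chernoff
    set S := fun ω => ∑ i : Fin m, Y i ω with hS
    have hSmeas : Measurable S := by
      apply Finset.measurable_sum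
      intro i _
      exact hmeasY i
    have hSint : Integrable (fun ω => Real.exp (t * S ω)) P := by
      refine integrable_of_abs_le P ((hSmeas.const_mul t).exp)
        (C := Real.exp (t * (m * b))) fun ω => ?_
      rw [abs_of_pos (Real.exp_pos _), Real.exp_le_exp]
      refine mul_le_mul_of_nonneg_left ?_ ht
      calc S ω ≤ |S ω| := le_abs_self _
        _ ≤ ∑ i : Fin m, |Y i ω| := by
            rw [hS]
            exact Finset.abs_sum_le_sum_abs _ _
        _ ≤ ∑ _i : Fin m, b := Finset.sum_le_sum fun i _ => hb i ω
        _ = m * b := by simp [mul_comm]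
    have hchernoff := measure_ge_le_exp_mul_mgf (μ := P) (X := S) ε ht hSint
    -- mgf bound
    have hmgf_eq : ∀ i : Fin m, mgf (Y (i:ℕ)) P t = mgf (Y 0) P t := by
      intro i
      have := ((hident i).comp (Measurable.exp (measurable_id.const_mul t))).integral_eq
      simpa [mgf, Function.comp] using this
    have hmgf_sum : mgf S P t = (mgf (Y 0) P t) ^ m := by
      rw [hS, show (fun ω => ∑ i : Fin m, Y i ω) = ∑ i : Fin m, Y (i:ℕ) from by
        ext ω; simp]
      rw [hindep.mgf_sum (fun i => hmeasY i) Finset.univ]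
      rw [Finset.prod_congr rfl fun i _ => hmgf_eq i]
      simp [Finset.prod_const]
    have hmgf0 : mgf (Y 0) P t ≤ Real.exp (t ^ 2 * σ2 / 2 * (3 / (3 - t * b))) :=
      mgf_quad_bound P (hmeasY 0) (hb 0) hmean ht htb
    have hmgf_pow : mgf S P t ≤ Real.exp (t ^ 2 * σ2 / 2 * (3 / (3 - t * b))) ^ m := by
      rw [hmgf_sum]
      exact pow_le_pow_left₀ mgf_nonneg hmgf0 m
    -- assembling
    have hevent : {ω | ε ≤ ∑ i ∈ Finset.range m, Y i ω} = {ω | ε ≤ S ω} := by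
      ext ω
      rw [hS]
      simp [Finset.sum_range fun i => Y i ω, Fin.sum_univ_eq_sum_range]
    have hfinal : Real.exp (-t * ε) * Real.exp (t ^ 2 * σ2 / 2 * (3 / (3 - t * b))) ^ m
        = Real.exp (-t * ε + m * (t ^ 2 * σ2 / 2 * (3 / (3 - t * b)))) := by
      rw [← Real.exp_nat_mul, ← Real.exp_add]
    have harith : -t * ε + m * (t ^ 2 * σ2 / 2 * (3 / (3 - t * b)))
        = -(ε ^ 2) / (2 * V + (2 / 3) * b * ε) := by
      rw [h3tb, htdef]
      have hVne : V ≠ 0 := ne_of_gt (lt_of_lt_of_le hVpos le_rfl)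
      have h2 : 2 * V + (2/3) * b * ε ≠ 0 := by positivity
      field_simp
      ring
    calc (P {ω | ε ≤ ∑ i ∈ Finset.range m, Y i ω}).toReal
        = (P {ω | ε ≤ S ω}).toReal := by rw [hevent]
      _ ≤ Real.exp (-t * ε) * mgf S P t := hchernoff
      _ ≤ Real.exp (-t * ε) * Real.exp (t ^ 2 * σ2 / 2 * (3 / (3 - t * b))) ^ m := by
          exact mul_le_mul_of_nonneg_left hmgf_pow (hexp_nonneg _)
      _ = Real.exp (-t * ε + m * (t ^ 2 * σ2 / 2 * (3 / (3 - t * b)))) := hfinal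
      _ = Real.exp (-(ε ^ 2) / (2 * V + (2 / 3) * b * ε)) := by rw [harith]


set_option linter.unusedSectionVars false in
lemma bernstein_two_sided (m : ℕ) (Y : ℕ → Ω → ℝ) (hmeasY : ∀ i, Measurable (Y i))
    (hindep : iIndepFun (fun i : Fin m => Y i) P)
    (hident : ∀ i : Fin m, IdentDistrib (Y i) (Y 0) P P)
    {b : ℝ} (hbpos : 0 < b) (hb : ∀ i ω, |Y i ω| ≤ b)
    (hmean : ∫ ω, Y 0 ω ∂P = 0) {ε : ℝ} (hε : 0 ≤ ε) :
    P {ω | ε ≤ |∑ i ∈ Finset.range m, Y i ω|} ≤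
      ENNReal.ofReal (2 * Real.exp (-(ε ^ 2) /
        (2 * ((m : ℝ) * ∫ ω, (Y 0 ω) ^ 2 ∂P) + (2 / 3) * b * ε))) := by
  set Y' : ℕ → Ω → ℝ := fun i ω => -(Y i ω) with hY'
  have hmeasY' : ∀ i, Measurable (Y' i) := fun i => (hmeasY i).neg
  have hindep' : iIndepFun (fun i : Fin m => Y' i) P :=
    hindep.comp (fun _ => fun v : ℝ => -v) (fun _ => measurable_neg)
  have hident' : ∀ i : Fin m, IdentDistrib (Y' i) (Y' 0) P P := fun i =>
    (hident i).comp measurable_neg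
  have hb' : ∀ i ω, |Y' i ω| ≤ b := fun i ω => by
    rw [hY']; simpa using hb i ω
  have hmean' : ∫ ω, Y' 0 ω ∂P = 0 := by
    rw [hY']; simp only; rw [integral_neg, hmean, neg_zero]
  have hsq' : ∫ ω, (Y' 0 ω) ^ 2 ∂P = ∫ ω, (Y 0 ω) ^ 2 ∂P := by
    simp [hY']
  have h1 := bernstein_upper P m Y hmeasY hindep hident hbpos hb hmean hε
  have h2 := bernstein_upper P m Y' hmeasY' hindep' hident' hbpos hb' hmean' hε
  rw [hsq'] at h2
  set r := Real.exp (-(ε ^ 2) / (2 * ((m : ℝ) * ∫ ω, (Y 0 ω) ^ 2 ∂P) + (2 / 3) * b * ε))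
    with hr
  have hrnn : 0 ≤ r := (Real.exp_pos _).le
  have hsub : {ω | ε ≤ |∑ i ∈ Finset.range m, Y i ω|} ⊆
      {ω | ε ≤ ∑ i ∈ Finset.range m, Y i ω} ∪ {ω | ε ≤ ∑ i ∈ Finset.range m, Y' i ω} := by
    intro ω hω
    have h' : ε ≤ |∑ i ∈ Finset.range m, Y i ω| := hω
    rcases le_abs.1 h' with h | h
    · exact Or.inl h
    · refine Or.inr ?_
      simp only [hY', Set.mem_setOf_eq, Finset.sum_neg_distrib]
      linarith
  calc P {ω | ε ≤ |∑ i ∈ Finset.range m, Y i ω|}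
      ≤ P ({ω | ε ≤ ∑ i ∈ Finset.range m, Y i ω}
          ∪ {ω | ε ≤ ∑ i ∈ Finset.range m, Y' i ω}) := measure_mono hsub
    _ ≤ P {ω | ε ≤ ∑ i ∈ Finset.range m, Y i ω}
        + P {ω | ε ≤ ∑ i ∈ Finset.range m, Y' i ω} := measure_union_le _ _
    _ ≤ ENNReal.ofReal r + ENNReal.ofReal r := by
        gcongr
        · exact (ENNReal.le_ofReal_iff_toReal_le (measure_ne_top _ _) hrnn).2 h1
        · exact (ENNReal.le_ofReal_iff_toReal_le (measure_ne_top _ _) hrnn).2 h2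
    _ = ENNReal.ofReal (2 * r) := by
        rw [← ENNReal.ofReal_add hrnn hrnn]; ring_nf



end RobustBernsteinAux

/-- Bernstein-type concentration for the robust location estimator under adversarial
contamination: the observations `z 0, …, z (nP−1)` are i.i.d., the remaining
`n_o = n − nP` observations are arbitrary measurable random variables, and with
`f_ν(z) = z/(1 + z²/ν)`, `μ(ν) = E[f_ν(z 0)]`, `σ²_ν = Var(f_ν(z 0))`, and
`μ̂_n(ν) = (1/n)·Σₜ f_ν(z t)`, for every `x ≥ 0`:
`P(|μ̂_n(ν) − μ(ν)| ≥ √ν·n_o/n + (nP/n)·x/√nP)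
  ≤ 2·exp(−x²/(2σ²_ν + (2/3)·√(ν/nP)·x))`. -/
theorem robust_mean_bernstein_bound {Ω : Type*} [MeasurableSpace Ω]
    (P : Measure Ω) [IsProbabilityMeasure P]
    (n nP : ℕ) (hnP : 1 ≤ nP) (hn : nP ≤ n) {ν : ℝ} (hν : 0 < ν)
    (z : ℕ → Ω → ℝ) (hmeas : ∀ t, Measurable (z t))
    (hindep : iIndepFun (fun i : Fin nP => z i) P)
    (hident : ∀ i : Fin nP, IdentDistrib (z i) (z 0) P P)
    (x : ℝ) (hx : 0 ≤ x) :
    P {ω | Real.sqrt ν * ((n - nP : ℕ) : ℝ) / (n : ℝ)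
            + ((nP : ℝ) / (n : ℝ)) * (x / Real.sqrt nP)
          ≤ |(1 / (n : ℝ)) * ∑ t ∈ Finset.range n, z t ω / (1 + (z t ω) ^ 2 / ν)
              - ∫ ω', z 0 ω' / (1 + (z 0 ω') ^ 2 / ν) ∂P|}
      ≤ ENNReal.ofReal (2 * Real.exp (-(x ^ 2) /
          (2 * variance (fun ω => z 0 ω / (1 + (z 0 ω) ^ 2 / ν)) P
            + (2 / 3) * Real.sqrt (ν / nP) * x))) := by

  classical
  have hν' : (0:ℝ) ≤ ν := hν.le
  set f : ℝ → ℝ := fun v => v / (1 + v ^ 2 / ν) with hfdef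
  have hfmeas : Measurable f :=
    measurable_id.div (measurable_const.add ((measurable_id.pow_const 2).div_const ν))
  have hden : ∀ v : ℝ, 0 < 1 + v ^ 2 / ν := fun v => by positivity
  have hss : Real.sqrt ν * Real.sqrt ν = ν := Real.mul_self_sqrt hν'
  have hfb : ∀ v : ℝ, |f v| ≤ Real.sqrt ν / 2 := by
    intro v
    have hd := hden v
    have hsv : 0 < Real.sqrt ν := Real.sqrt_pos.2 hν
    have habs : |f v| = |v| / (1 + v ^ 2 / ν) := by
      rw [hfdef]; simp only; rw [abs_div, abs_of_pos hd]
    rw [habs, div_le_iff₀ hd]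
    have hvν : v ^ 2 / ν * ν = v ^ 2 := div_mul_cancel₀ _ (ne_of_gt hν)
    nlinarith [sq_nonneg (Real.sqrt ν - |v|), sq_abs v, hss, hsv, abs_nonneg v]
  have hgmeas : ∀ t, Measurable (fun ω => f (z t ω)) := fun t => hfmeas.comp (hmeas t)
  have hgint : ∀ t, Integrable (fun ω => f (z t ω)) P := fun t =>
    integrable_of_abs_le P (hgmeas t) (fun ω => hfb (z t ω))
  set μc : ℝ := ∫ ω', f (z 0 ω') ∂P with hμc
  have hμb : |μc| ≤ Real.sqrt ν / 2 := by
    rw [hμc]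
    calc |∫ ω', f (z 0 ω') ∂P| = ‖∫ ω', f (z 0 ω') ∂P‖ := (Real.norm_eq_abs _).symm
      _ ≤ ∫ ω', ‖f (z 0 ω')‖ ∂P := norm_integral_le_integral_norm _
      _ = ∫ ω', |f (z 0 ω')| ∂P := by simp [Real.norm_eq_abs]
      _ ≤ ∫ _ω', (Real.sqrt ν / 2) ∂P :=
          integral_mono (hgint 0).abs (integrable_const _) (fun ω => hfb (z 0 ω))
      _ = Real.sqrt ν / 2 := by simp
  set Y : ℕ → Ω → ℝ := fun t ω => f (z t ω) - μc with hY
  have hYmeas : ∀ t, Measurable (Y t) := fun t => (hgmeas t).sub measurable_const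
  have hYb : ∀ t ω, |Y t ω| ≤ Real.sqrt ν := by
    intro t ω
    calc |Y t ω| ≤ |f (z t ω)| + |μc| := abs_sub _ _
      _ ≤ Real.sqrt ν / 2 + Real.sqrt ν / 2 := add_le_add (hfb _) hμb
      _ = Real.sqrt ν := by ring
  have hbpos : (0:ℝ) < Real.sqrt ν := Real.sqrt_pos.2 hν
  have hYindep : iIndepFun (fun i : Fin nP => Y i) P :=
    hindep.comp (fun _ => fun v : ℝ => f v - μc) (fun _ => hfmeas.sub measurable_const)
  have hYident : ∀ i : Fin nP, IdentDistrib (Y i) (Y 0) P P := fun i =>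
    (hident i).comp (hfmeas.sub measurable_const)
  have hYmean : ∫ ω, Y 0 ω ∂P = 0 := by
    rw [hY]
    simp only
    rw [integral_sub (hgint 0) (integrable_const μc), integral_const]
    simp [hμc]
  -- variance identification
  have hg2int : Integrable (fun ω => (f (z 0 ω)) ^ 2) P := by
    refine integrable_of_abs_le P ((hgmeas 0).pow_const 2)
      (C := (Real.sqrt ν / 2) ^ 2) fun ω => ?_
    rw [abs_pow, sq_abs, ← sq_abs (f (z 0 ω))]
    exact pow_le_pow_left₀ (abs_nonneg _) (hfb _) 2
  have hmemlp : MemLp (fun ω => z 0 ω / (1 + (z 0 ω) ^ 2 / ν)) 2 P := by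
    refine MemLp.of_bound (hgmeas 0).aestronglyMeasurable (Real.sqrt ν / 2)
      (ae_of_all _ fun ω => ?_)
    rw [Real.norm_eq_abs]
    exact hfb (z 0 ω)
  have hσ2 : ∫ ω, (Y 0 ω) ^ 2 ∂P
      = variance (fun ω => z 0 ω / (1 + (z 0 ω) ^ 2 / ν)) P := by
    rw [variance_eq_sub hmemlp]
    have hexpand : ∀ ω, (Y 0 ω) ^ 2
        = (f (z 0 ω)) ^ 2 - (2 * μc) * f (z 0 ω) + μc ^ 2 := by
      intro ω; rw [hY]; simp only; ring
    rw [integral_congr_ae (ae_of_all _ hexpand)]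
    have e1 : ∫ ω, (f (z 0 ω) ^ 2 - 2 * μc * f (z 0 ω) + μc ^ 2) ∂P
        = (∫ ω, (f (z 0 ω) ^ 2 - 2 * μc * f (z 0 ω)) ∂P) + ∫ _ω, μc ^ 2 ∂P :=
      integral_add (hg2int.sub ((hgint 0).const_mul (2 * μc))) (integrable_const _)
    have e2 : ∫ ω, (f (z 0 ω) ^ 2 - 2 * μc * f (z 0 ω)) ∂P
        = (∫ ω, f (z 0 ω) ^ 2 ∂P) - ∫ ω, 2 * μc * f (z 0 ω) ∂P :=
      integral_sub hg2int ((hgint 0).const_mul (2 * μc))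
    have h1 : ∫ ω, f (z 0 ω) ∂P = μc := hμc.symm
    have h2 : (∫ ω, (f (z 0 ω)) ^ 2 ∂P)
        = ∫ ω, ((fun ω' => z 0 ω' / (1 + (z 0 ω') ^ 2 / ν)) ^ 2) ω ∂P := by
      apply integral_congr_ae
      exact ae_of_all _ fun ω => by simp [hfdef, Pi.pow_apply]
    rw [e1, e2, integral_const, integral_const_mul, h1, probReal_univ]
    simp only [ENNReal.toReal_one, one_smul]
    rw [h2]
    ring
  -- event inclusion
  have hn0 : (0:ℝ) < (n : ℝ) := by
    have : 1 ≤ n := le_trans hnP hn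
    exact_mod_cast this
  have hnP0 : (0:ℝ) < (nP : ℝ) := by exact_mod_cast hnP
  have hsnP : (0:ℝ) < Real.sqrt nP := Real.sqrt_pos.2 hnP0
  have hssP : Real.sqrt nP * Real.sqrt nP = (nP:ℝ) := Real.mul_self_sqrt hnP0.le
  set ε : ℝ := Real.sqrt nP * x with hε
  have hεnn : 0 ≤ ε := mul_nonneg hsnP.le hx
  have hsub : {ω | Real.sqrt ν * ((n - nP : ℕ) : ℝ) / (n : ℝ)
            + ((nP : ℝ) / (n : ℝ)) * (x / Real.sqrt nP)
          ≤ |(1 / (n : ℝ)) * ∑ t ∈ Finset.range n, z t ω / (1 + (z t ω) ^ 2 / ν)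
              - ∫ ω', z 0 ω' / (1 + (z 0 ω') ^ 2 / ν) ∂P|}
      ⊆ {ω | ε ≤ |∑ t ∈ Finset.range nP, Y t ω|} := by
    intro ω hω
    have hA : Real.sqrt ν * ((n - nP : ℕ) : ℝ) / (n : ℝ)
            + ((nP : ℝ) / (n : ℝ)) * (x / Real.sqrt nP)
          ≤ |(1 / (n : ℝ)) * ∑ t ∈ Finset.range n, f (z t ω) - μc| := hω
    set T1 := ∑ t ∈ Finset.range nP, Y t ω with hT1
    set T2 := ∑ t ∈ Finset.Ico nP n, Y t ω with hT2
    have hdecomp : (1 / (n:ℝ)) * ∑ t ∈ Finset.range n, f (z t ω) - μc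
        = (1 / (n:ℝ)) * (T1 + T2) := by
      have hsplit : T1 + T2 = ∑ t ∈ Finset.range n, Y t ω := by
        rw [hT1, hT2, Finset.range_eq_Ico, Finset.range_eq_Ico]
        exact Finset.sum_Ico_consecutive _ (Nat.zero_le nP) hn
      have hsum : ∑ t ∈ Finset.range n, Y t ω
          = (∑ t ∈ Finset.range n, f (z t ω)) - n * μc := by
        rw [hY]
        rw [Finset.sum_sub_distrib, Finset.sum_const, Finset.card_range]
        simp [nsmul_eq_mul]
      rw [hsplit, hsum]
      field_simp
    have hT2b : |T2| ≤ ((n - nP : ℕ) : ℝ) * Real.sqrt ν := by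
      calc |T2| ≤ ∑ t ∈ Finset.Ico nP n, |Y t ω| := Finset.abs_sum_le_sum_abs _ _
        _ ≤ ∑ _t ∈ Finset.Ico nP n, Real.sqrt ν :=
            Finset.sum_le_sum fun t _ => hYb t ω
        _ = ((n - nP : ℕ) : ℝ) * Real.sqrt ν := by
            rw [Finset.sum_const, Nat.card_Ico, nsmul_eq_mul]
    have hAbs : |(1 / (n:ℝ)) * ∑ t ∈ Finset.range n, f (z t ω) - μc|
        ≤ (1 / (n:ℝ)) * |T1| + (1 / (n:ℝ)) * (((n - nP : ℕ) : ℝ) * Real.sqrt ν) := by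
      rw [hdecomp]
      calc |(1 / (n:ℝ)) * (T1 + T2)| = (1 / (n:ℝ)) * |T1 + T2| := by
            rw [abs_mul, abs_of_pos (by positivity : (0:ℝ) < 1 / (n:ℝ))]
        _ ≤ (1 / (n:ℝ)) * (|T1| + |T2|) := by
            apply mul_le_mul_of_nonneg_left (abs_add_le _ _) (by positivity)
        _ ≤ (1 / (n:ℝ)) * |T1| + (1 / (n:ℝ)) * (((n - nP : ℕ) : ℝ) * Real.sqrt ν) := by
            rw [mul_add]
            gcongr
    have hkey : ((nP : ℝ) / (n : ℝ)) * (x / Real.sqrt nP) ≤ (1 / (n:ℝ)) * |T1| := by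
      have heq : Real.sqrt ν * ((n - nP : ℕ) : ℝ) / (n : ℝ)
          = (1 / (n:ℝ)) * (((n - nP : ℕ) : ℝ) * Real.sqrt ν) := by ring
      linarith [hA.trans hAbs]
    have h2 : (nP:ℝ) * (x / Real.sqrt nP) ≤ |T1| := by
      have h1' : ((nP:ℝ) * (x / Real.sqrt nP)) / n ≤ |T1| / n := by
        calc ((nP:ℝ) * (x / Real.sqrt nP)) / n
            = ((nP : ℝ) / (n : ℝ)) * (x / Real.sqrt nP) := by ring
          _ ≤ (1 / (n:ℝ)) * |T1| := hkey
          _ = |T1| / n := by ring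
      exact (div_le_div_iff_of_pos_right hn0).1 h1'
    have h3 : ε = (nP:ℝ) * (x / Real.sqrt nP) := by
      rw [hε, mul_div_assoc', eq_div_iff (ne_of_gt hsnP)]
      linear_combination x * hssP
    show ε ≤ |T1|
    rw [h3]
    exact h2
  have hbern := bernstein_two_sided P nP Y hYmeas hYindep hYident hbpos hYb hYmean hεnn
  -- exponent arithmetic
  set v := ∫ ω, (Y 0 ω) ^ 2 ∂P with hv
  have hexpeq : -(ε ^ 2) / (2 * ((nP : ℝ) * v) + (2 / 3) * Real.sqrt ν * ε)
      = -(x ^ 2) / (2 * v + (2 / 3) * Real.sqrt (ν / nP) * x) := by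
    have h1 : ε ^ 2 = (nP:ℝ) * x ^ 2 := by
      rw [hε, mul_pow, Real.sq_sqrt hnP0.le]
    have h2 : Real.sqrt (ν / nP) = Real.sqrt ν / Real.sqrt nP :=
      Real.sqrt_div hν' _
    have h4 : (nP:ℝ) * (Real.sqrt ν / Real.sqrt nP) = Real.sqrt ν * Real.sqrt nP := by
      rw [← mul_div_assoc, div_eq_iff (ne_of_gt hsnP)]
      linear_combination (-Real.sqrt ν) * hssP
    have h3 : 2 * ((nP : ℝ) * v) + (2 / 3) * Real.sqrt ν * ε
        = (nP:ℝ) * (2 * v + (2 / 3) * (Real.sqrt ν / Real.sqrt nP) * x) := by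
      rw [hε]
      linear_combination (2 / 3) * x * h4.symm
    rw [h1, h2, h3, neg_div, neg_div, mul_div_mul_left _ _ (ne_of_gt hnP0)]
  calc P {ω | Real.sqrt ν * ((n - nP : ℕ) : ℝ) / (n : ℝ)
            + ((nP : ℝ) / (n : ℝ)) * (x / Real.sqrt nP)
          ≤ |(1 / (n : ℝ)) * ∑ t ∈ Finset.range n, z t ω / (1 + (z t ω) ^ 2 / ν)
              - ∫ ω', z 0 ω' / (1 + (z 0 ω') ^ 2 / ν) ∂P|}
      ≤ P {ω | ε ≤ |∑ t ∈ Finset.range nP, Y t ω|} := measure_mono hsub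
    _ ≤ ENNReal.ofReal (2 * Real.exp (-(ε ^ 2) /
          (2 * ((nP : ℝ) * ∫ ω, (Y 0 ω) ^ 2 ∂P) + (2 / 3) * Real.sqrt ν * ε))) := hbern
    _ = ENNReal.ofReal (2 * Real.exp (-(x ^ 2) /
          (2 * variance (fun ω => z 0 ω / (1 + (z 0 ω) ^ 2 / ν)) P
            + (2 / 3) * Real.sqrt (ν / nP) * x))) := by
        rw [← hv, hexpeq, hσ2]
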